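/- Let t > 0 and let g be the automorphism of B^m ⊂ ℂ^m given by g(z) = (cosh(t)z₁ + sinh(t), Uz')/(sinh(t)z₁ + cosh(t)) where U ∈ U(m−1) is unitary and z = (z₁, z'). If z = (c, z') with |c| < 1 and z' ≠ 0, ‖z‖ ≤ 1, then lim_{n→∞} (1/n) log ‖gⁿ(z) − e₁‖ = −t. -/

import Mathlib

open Metric Filter Matrix

noncomputable section

/-- The automorphism `g = a_t ∘ k` of the unit ball in `ℂ^{m+1}`, where
`k(z₁, z') = (z₁, U z')` and `a_t(z) = (cosh(t) z₁ + sinh(t), z₂, …) / (sinh(t) z₁ + cosh(t))`;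
explicitly `g(z₁, z') = (cosh(t) z₁ + sinh(t), U z') / (sinh(t) z₁ + cosh(t))`. -/
def gT {m : ℕ} (t : ℝ) (U : Matrix (Fin m) (Fin m) ℂ)
    (z : EuclideanSpace ℂ (Fin (m+1))) : EuclideanSpace ℂ (Fin (m+1)) :=
  WithLp.toLp 2 (fun i : Fin (m+1) => (if h : i = 0 then (Real.cosh t : ℂ) * z 0 + Real.sinh t
      else ∑ k : Fin m, U (i.pred h) k * z k.succ) /
    ((Real.sinh t : ℂ) * z 0 + Real.cosh t))

lemma unitary_mulVec_normSq {m : ℕ} (V : Matrix (Fin m) (Fin m) ℂ)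
    (hV : V ∈ Matrix.unitaryGroup (Fin m) ℂ) (v : Fin m → ℂ) :
    ∑ i, Complex.normSq ((V *ᵥ v) i) = ∑ i, Complex.normSq (v i) := by
  have key : ∀ w : Fin m → ℂ, ((∑ i, Complex.normSq (w i) : ℝ) : ℂ) = star w ⬝ᵥ w := by
    intro w
    push_cast
    simp [dotProduct, Complex.normSq_eq_conj_mul_self]
  have h1 : star (V *ᵥ v) ⬝ᵥ (V *ᵥ v) = star v ⬝ᵥ v := by
    rw [star_mulVec, dotProduct_mulVec, vecMul_vecMul]
    have : Vᴴ * V = 1 := by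
      have := hV.1
      rwa [Matrix.star_eq_conjTranspose] at this
    rw [this, vecMul_one]
  have := (key (V *ᵥ v)).trans (h1.trans (key v).symm)
  exact_mod_cast this

lemma D_ne_zero {c : ℂ} (hc : ‖c‖ ≤ 1) {x : ℝ} (hx : 0 ≤ x) :
    (Real.sinh x : ℂ) * c + (Real.cosh x : ℂ) ≠ 0 := by
  intro h
  have hs : 0 ≤ Real.sinh x := Real.sinh_nonneg_iff.mpr hx
  have h1 : (Real.cosh x : ℂ) = -((Real.sinh x : ℂ) * c) := by linear_combination h
  have h2 := congrArg norm h1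
  rw [Complex.norm_real, norm_neg, norm_mul, Complex.norm_real, Real.norm_eq_abs,
    Real.norm_eq_abs, abs_of_nonneg hs, abs_of_nonneg (Real.cosh_pos x).le] at h2
  have h3 : Real.sinh x * ‖c‖ ≤ Real.sinh x * 1 :=
    mul_le_mul_of_nonneg_left hc hs
  have h4 : Real.cosh x - Real.sinh x = Real.exp (-x) := Real.cosh_sub_sinh x
  nlinarith [Real.exp_pos (-x)]

lemma gT_iterate {m : ℕ} (t : ℝ) (ht : 0 ≤ t) (U : Matrix (Fin m) (Fin m) ℂ)
    (z : EuclideanSpace ℂ (Fin (m+1))) (hc : ‖z 0‖ ≤ 1) (n : ℕ) :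
    (gT t U)^[n] z = WithLp.toLp 2 (fun i : Fin (m+1) =>
      (if h : i = 0 then (Real.cosh ((n:ℝ)*t) : ℂ) * z 0 + Real.sinh ((n:ℝ)*t)
       else ((U^n) *ᵥ (fun j => z j.succ)) (i.pred h)) /
      ((Real.sinh ((n:ℝ)*t) : ℂ) * z 0 + Real.cosh ((n:ℝ)*t))) := by
  induction n with
  | zero =>
    ext i
    simp only [PiLp.toLp_apply, Function.iterate_zero, id_eq, Nat.cast_zero, zero_mul, Real.cosh_zero,
      Real.sinh_zero, pow_zero, one_mulVec]
    by_cases h : i = 0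
    · subst h; simp
    · simp only [dif_neg h, Complex.ofReal_zero, Complex.ofReal_one, zero_mul, zero_add, div_one]
      rw [Fin.succ_pred]
  | succ n ih =>
    have hDn : (Real.sinh ((n:ℝ)*t) : ℂ) * z 0 + Real.cosh ((n:ℝ)*t) ≠ 0 :=
      D_ne_zero hc (by positivity)
    have hDn1 : (Real.sinh (((n:ℕ)+1:ℝ)*t) : ℂ) * z 0 + Real.cosh (((n:ℕ)+1:ℝ)*t) ≠ 0 :=
      D_ne_zero hc (by positivity)
    have hC1 : (Real.cosh (((n:ℕ)+1:ℝ)*t) : ℂ)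
        = Real.cosh ((n:ℝ)*t) * Real.cosh t + Real.sinh ((n:ℝ)*t) * Real.sinh t := by
      rw [add_mul, one_mul, Real.cosh_add]; push_cast; ring
    have hS1 : (Real.sinh (((n:ℕ)+1:ℝ)*t) : ℂ)
        = Real.sinh ((n:ℝ)*t) * Real.cosh t + Real.cosh ((n:ℝ)*t) * Real.sinh t := by
      rw [add_mul, one_mul, Real.sinh_add]; push_cast; ring
    have hden : (Real.sinh t : ℂ) *
          (((Real.cosh ((n:ℝ)*t) : ℂ) * z 0 + Real.sinh ((n:ℝ)*t)) /
            ((Real.sinh ((n:ℝ)*t) : ℂ) * z 0 + Real.cosh ((n:ℝ)*t))) + Real.cosh t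
        = ((Real.sinh (((n:ℕ)+1:ℝ)*t) : ℂ) * z 0 + Real.cosh (((n:ℕ)+1:ℝ)*t)) /
            ((Real.sinh ((n:ℝ)*t) : ℂ) * z 0 + Real.cosh ((n:ℝ)*t)) := by
      rw [mul_div_assoc', div_add' _ _ _ hDn]
      congr 1
      linear_combination -(z 0 * hS1) - hC1
    have hnum : (Real.cosh t : ℂ) *
          (((Real.cosh ((n:ℝ)*t) : ℂ) * z 0 + Real.sinh ((n:ℝ)*t)) /
            ((Real.sinh ((n:ℝ)*t) : ℂ) * z 0 + Real.cosh ((n:ℝ)*t))) + Real.sinh t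
        = ((Real.cosh (((n:ℕ)+1:ℝ)*t) : ℂ) * z 0 + Real.sinh (((n:ℕ)+1:ℝ)*t)) /
            ((Real.sinh ((n:ℝ)*t) : ℂ) * z 0 + Real.cosh ((n:ℝ)*t)) := by
      rw [mul_div_assoc', div_add' _ _ _ hDn]
      congr 1
      linear_combination -(z 0 * hC1) - hS1
    rw [Function.iterate_succ_apply', ih]
    ext i
    show ((if h : i = 0 then _ else _) / _ : ℂ) = _
    push_cast only [Nat.cast_succ]
    by_cases h : i = 0
    · subst h
      simp only [dif_pos]
      rw [hnum, hden, div_div_div_cancel_right₀ hDn]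
    · simp only [dif_neg h, dite_true]
      rw [hden]
      simp only [dif_neg (Fin.succ_ne_zero _), Fin.pred_succ, ← mul_div_assoc,
        ← Finset.sum_div]
      rw [div_div_div_cancel_right₀ hDn]
      congr 1
      rw [pow_succ', ← mulVec_mulVec]
      rfl

/-- For `t > 0`, `U` unitary, and `z = (c, z')` in the closed unit ball with
`|c| < 1` and `z' ≠ 0`, one has `lim_{n→∞} (1/n) log ‖gⁿ(z) − e₁‖ = −t`. -/
theorem stmt7 {m : ℕ} (t : ℝ) (ht : 0 < t)
    (U : Matrix (Fin m) (Fin m) ℂ) (hU : U ∈ Matrix.unitaryGroup (Fin m) ℂ)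
    (z : EuclideanSpace ℂ (Fin (m+1))) (hz : ‖z‖ ≤ 1)
    (hc : ‖z 0‖ < 1) (hz' : ∃ j : Fin m, z j.succ ≠ 0) :
    Tendsto (fun n : ℕ => (1 / (n : ℝ)) *
        Real.log ‖(gT t U)^[n] z - EuclideanSpace.single 0 (1 : ℂ)‖)
      atTop (nhds (-t)) := by
  set c : ℂ := z 0 with hcdef
  set v : Fin m → ℂ := fun j => z j.succ with hvdef
  set K : ℝ := ∑ j, Complex.normSq (v j) with hKdef
  obtain ⟨j0, hj0⟩ := hz'
  have hK : 0 < K := by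
    apply Finset.sum_pos' (fun j _ => Complex.normSq_nonneg _)
    exact ⟨j0, Finset.mem_univ _, Complex.normSq_pos.mpr hj0⟩
  set r : ℝ := Real.exp (-t) with hrdef
  have hr0 : 0 < r := Real.exp_pos _
  have hr1 : r < 1 := Real.exp_lt_one_iff.mpr (by linarith)
  set E : ℝ := Real.exp t with hEdef
  have hrE : ∀ n : ℕ, r ^ n * E ^ n = 1 := by
    intro n
    rw [← mul_pow, hrdef, hEdef, ← Real.exp_add]
    simp
  set D : ℕ → ℂ := fun n => (Real.sinh ((n:ℝ)*t) : ℂ) * c + Real.cosh ((n:ℝ)*t) with hDdef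
  have hDne : ∀ n : ℕ, D n ≠ 0 := fun n => D_ne_zero hc.le (by positivity)
  have hDpos : ∀ n : ℕ, 0 < ‖D n‖ := fun n => by
    simpa using hDne n
  set N : ℕ → ℝ := fun n => Complex.normSq (c - 1) * (r ^ n) ^ 2 + K with hNdef
  have hNpos : ∀ n, 0 < N n := fun n => by
    have := Complex.normSq_nonneg (c - 1)
    have : (0:ℝ) ≤ Complex.normSq (c - 1) * (r ^ n) ^ 2 := by positivity
    simp only [hNdef]; linarith
  -- the norm formula
  have hnorm : ∀ n : ℕ, ‖(gT t U)^[n] z - EuclideanSpace.single 0 (1 : ℂ)‖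
      = Real.sqrt (N n) / ‖D n‖ := by
    intro n
    have hCS : (((Real.cosh ((n:ℝ)*t) : ℝ) - Real.sinh ((n:ℝ)*t)) : ℝ) = r ^ n := by
      rw [Real.cosh_sub_sinh, hrdef, ← Real.exp_nat_mul]
      ring_nf
    have hCSc : ((Real.cosh ((n:ℝ)*t) : ℂ) - Real.sinh ((n:ℝ)*t)) = ((r ^ n : ℝ) : ℂ) := by
      exact_mod_cast congrArg (fun x : ℝ => (x : ℂ)) hCS
    have e0 : (((gT t U)^[n] z - EuclideanSpace.single 0 (1 : ℂ) : EuclideanSpace ℂ (Fin (m+1)))) 0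
        = (c - 1) * ((r ^ n : ℝ) : ℂ) / D n := by
      rw [PiLp.sub_apply, gT_iterate t ht.le U z hc.le n]
      simp only [PiLp.toLp_apply, EuclideanSpace.single_apply, dite_true, if_true, dite_eq_ite, ite_true, ← hcdef]
      rw [div_sub_one (hDne n)]
      congr 1
      linear_combination (c - 1) * hCSc
    have es : ∀ j : Fin m, (((gT t U)^[n] z - EuclideanSpace.single 0 (1 : ℂ) : EuclideanSpace ℂ (Fin (m+1)))) j.succ
        = ((U ^ n) *ᵥ v) j / D n := by
      intro j
      rw [PiLp.sub_apply, gT_iterate t ht.le U z hc.le n]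
      simp only [PiLp.toLp_apply, dif_neg (Fin.succ_ne_zero j), Fin.pred_succ, EuclideanSpace.single_apply,
        if_neg (Fin.succ_ne_zero j), sub_zero, ← hcdef, ← hvdef]
      rfl
    rw [EuclideanSpace.norm_eq, Fin.sum_univ_succ, e0]
    have hterm0 : ‖(c - 1) * ((r ^ n : ℝ) : ℂ) / D n‖ ^ 2
        = Complex.normSq (c - 1) * (r ^ n) ^ 2 / ‖D n‖ ^ 2 := by
      rw [norm_div, norm_mul, Complex.norm_real, Real.norm_eq_abs,
        abs_of_nonneg (by positivity), div_pow, mul_pow, Complex.sq_norm]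
    have hterms : ∀ j : Fin m, ‖(((gT t U)^[n] z - EuclideanSpace.single 0 (1 : ℂ) : EuclideanSpace ℂ (Fin (m+1)))) j.succ‖ ^ 2
        = Complex.normSq (((U ^ n) *ᵥ v) j) / ‖D n‖ ^ 2 := by
      intro j
      rw [es j, norm_div, div_pow, Complex.sq_norm]
    rw [hterm0]
    rw [Finset.sum_congr rfl (fun j _ => hterms j), ← Finset.sum_div,
      unitary_mulVec_normSq (U ^ n) (pow_mem hU n) v, ← hKdef]
    rw [← add_div, Real.sqrt_div (hNpos n).le, Real.sqrt_sq (norm_nonneg _)]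
  -- limits
  have hq : Tendsto (fun n : ℕ => (r^2)^n) atTop (nhds 0) :=
    tendsto_pow_atTop_nhds_zero_of_lt_one (by positivity) (by nlinarith)
  have hN : Tendsto N atTop (nhds K) := by
    have h1 : Tendsto (fun n : ℕ => Complex.normSq (c-1) * (r^2)^n + K) atTop
        (nhds (Complex.normSq (c-1) * 0 + K)) := (hq.const_mul _).add_const K
    rw [mul_zero, zero_add] at h1
    exact h1.congr (fun n => by simp only [hNdef]; ring)
  have hsqrtN : Tendsto (fun n => Real.sqrt (N n)) atTop (nhds (Real.sqrt K)) := hN.sqrt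
  have hcne : c + 1 ≠ 0 := by
    intro h
    have hc1 : c = -1 := by linear_combination h
    rw [hc1] at hc
    simp at hc
  have hEn : ∀ n : ℕ, Real.exp ((n:ℝ)*t) = E^n := fun n => Real.exp_nat_mul t n
  have hEn' : ∀ n : ℕ, Real.exp (-((n:ℝ)*t)) = r^n := by
    intro n
    rw [show -((n:ℝ)*t) = (n:ℝ)*(-t) by ring, Real.exp_nat_mul]
  have hsinh : ∀ n : ℕ, Real.sinh ((n:ℝ)*t) * r^n = (1 - (r^2)^n)/2 := by
    intro n
    have h1 : E^n * r^n = 1 := by rw [mul_comm]; exact hrE n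
    rw [Real.sinh_eq, hEn, hEn']
    linear_combination h1/2
  have hcosh : ∀ n : ℕ, Real.cosh ((n:ℝ)*t) * r^n = (1 + (r^2)^n)/2 := by
    intro n
    have h1 : E^n * r^n = 1 := by rw [mul_comm]; exact hrE n
    rw [Real.cosh_eq, hEn, hEn']
    linear_combination h1/2
  have hDr : ∀ n : ℕ, D n * ((r^n : ℝ) : ℂ)
      = ((((1 - (r^2)^n)/2 : ℝ)) : ℂ) * c + ((((1 + (r^2)^n)/2 : ℝ)) : ℂ) := by
    intro n
    have h1 : ((Real.sinh ((n:ℝ)*t) : ℂ)) * ((r^n : ℝ) : ℂ) = (((1 - (r^2)^n)/2 : ℝ) : ℂ) := by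
      exact_mod_cast congrArg (fun x : ℝ => (x : ℂ)) (hsinh n)
    have h2 : ((Real.cosh ((n:ℝ)*t) : ℂ)) * ((r^n : ℝ) : ℂ) = (((1 + (r^2)^n)/2 : ℝ) : ℂ) := by
      exact_mod_cast congrArg (fun x : ℝ => (x : ℂ)) (hcosh n)
    simp only [hDdef]
    linear_combination c * h1 + h2
  have hDlim : Tendsto (fun n : ℕ => D n * ((r^n : ℝ) : ℂ)) atTop (nhds ((c + 1)/2)) := by
    have hhalf : Tendsto (fun n : ℕ => ((1 - (r^2)^n)/2 : ℝ)) atTop (nhds (1/2)) := by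
      have := (hq.const_sub (1:ℝ)).div_const (2:ℝ)
      simpa using this
    have hhalf' : Tendsto (fun n : ℕ => ((1 + (r^2)^n)/2 : ℝ)) atTop (nhds (1/2)) := by
      have := (hq.const_add (1:ℝ)).div_const (2:ℝ)
      simpa using this
    have c1 : Tendsto (fun n : ℕ => ((((1 - (r^2)^n)/2 : ℝ)) : ℂ)) atTop (nhds ((1/2 : ℝ) : ℂ)) :=
      (Complex.continuous_ofReal.tendsto _).comp hhalf
    have c2 : Tendsto (fun n : ℕ => ((((1 + (r^2)^n)/2 : ℝ)) : ℂ)) atTop (nhds ((1/2 : ℝ) : ℂ)) :=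
      (Complex.continuous_ofReal.tendsto _).comp hhalf'
    have := (c1.mul_const c).add c2
    have heq : ((1/2 : ℝ) : ℂ) * c + ((1/2 : ℝ) : ℂ) = (c+1)/2 := by push_cast; ring
    rw [heq] at this
    exact this.congr (fun n => (hDr n).symm)
  have habs : Tendsto (fun n : ℕ => ‖D n‖ * r^n) atTop
      (nhds (‖c+1‖/2)) := by
    have h3 : Tendsto (fun n : ℕ => ‖D n * ((r^n : ℝ) : ℂ)‖) atTop
        (nhds (‖(c+1)/2‖)) := (continuous_norm.tendsto _).comp hDlim
    have h4 : ‖(c+1)/2‖ = ‖c+1‖/2 := by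
      rw [norm_div, Complex.norm_two]
    rw [h4] at h3
    exact h3.congr (fun n => by
      rw [norm_mul, Complex.norm_real, Real.norm_eq_abs, abs_of_nonneg (pow_nonneg hr0.le n)])
  have habspos : 0 < ‖c+1‖/2 := by
    have := norm_pos_iff.mpr hcne
    linarith
  have hF : Tendsto (fun n : ℕ =>
      ‖(gT t U)^[n] z - EuclideanSpace.single 0 (1:ℂ)‖ * E^n) atTop
      (nhds (Real.sqrt K / (‖c+1‖/2))) := by
    have h5 := hsqrtN.div habs habspos.ne'
    refine h5.congr (fun n => ?_)
    simp only [Pi.div_apply]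
    rw [hnorm n]
    rw [div_mul_eq_mul_div,
      div_eq_div_iff (mul_ne_zero (hDpos n).ne' (pow_ne_zero n hr0.ne')) (hDpos n).ne']
    linear_combination (-(Real.sqrt (N n) * ‖D n‖)) * hrE n
  set L : ℝ := Real.sqrt K / (‖c+1‖/2) with hLdef
  have hL : 0 < L := div_pos (Real.sqrt_pos.mpr hK) habspos
  have hlog : Tendsto (fun n : ℕ =>
      Real.log (‖(gT t U)^[n] z - EuclideanSpace.single 0 (1:ℂ)‖ * E^n)) atTop
      (nhds (Real.log L)) := hF.log hL.ne'
  have hmain : Tendsto (fun n : ℕ => (1/(n:ℝ)) *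
      Real.log (‖(gT t U)^[n] z - EuclideanSpace.single 0 (1:ℂ)‖ * E^n) - t) atTop
      (nhds (-t)) := by
    have h0 := tendsto_one_div_atTop_nhds_zero_nat.mul hlog
    rw [zero_mul] at h0
    have := h0.sub_const t
    simpa using this
  refine Tendsto.congr' ?_ hmain
  filter_upwards [eventually_ge_atTop 1] with n hn
  have hn' : (n:ℝ) ≠ 0 := by
    have : (1:ℝ) ≤ (n:ℝ) := by exact_mod_cast hn
    linarith
  have hpos : 0 < ‖(gT t U)^[n] z - EuclideanSpace.single 0 (1:ℂ)‖ := by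
    rw [hnorm n]
    exact div_pos (Real.sqrt_pos.mpr (hNpos n)) (hDpos n)
  rw [Real.log_mul hpos.ne' (pow_pos (Real.exp_pos t) n).ne', Real.log_pow, Real.log_exp]
  field_simp
  ring
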